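/- Fix agents N = {1,…,5}, houses H = {h1,…,h5}, endowments e(1) = ½δ_{h1} + ½δ_{h2}, e(2) = ½δ_{h3} + ½δ_{h5}, e(3) = ½δ_{h1} + ½δ_{h4}, e(4) = ½δ_{h2} + ½δ_{h4}, e(5) = ½δ_{h3} + ½δ_{h5}, and the linear-order profile ≿ given by: agent 1: h3 ≻ h1 ≻ h2 ≻ h4 ≻ h5; agent 2: h5 ≻ h1 ≻ h2 ≻ h3 ≻ h4; agent 3: h1 ≻ h4 ≻ h2 ≻ h3 ≻ h5; agent 4: h2 ≻ h4 ≻ h1 ≻ h3 ≻ h5; agent 5: h5 ≻ h3 ≻ h1 ≻ h2 ≻ h4. Then every assignment that is SD-individually rational and SD-efficient with respect to this profile equals z_λ for some λ ∈ [0, ½], where z_λ(1) = λδ_{h1} + (½−λ)δ_{h2} + ½δ_{h3}, z_λ(2) = (½−λ)δ_{h1} + λδ_{h2} + ½δ_{h5}, z_λ(3) = ½δ_{h1} + ½δ_{h4}, z_λ(4) = ½δ_{h2} + ½δ_{h4}, z_λ(5) = ½δ_{h3} + ½δ_{h5}. In particular, in every such assignment agents 3, 4 and 5 receive exactly their endowments.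 -/

import Mathlib

open Finset
open scoped Classical

variable {N H : Type*}

noncomputable section

/-- The total weight that allocation `p` puts on houses weakly preferred to `h`
(with respect to the preference relation `R`, where `R a b` means `a ≿ b`). -/
def upperSum [Fintype H] (R : H → H → Prop) (p : H → ℝ) (h : H) : ℝ :=
  ∑ h' ∈ Finset.univ.filter (fun h' => R h' h), p h'

/-- `p ≿^SD q` (stochastic dominance). -/
def SDge [Fintype H] (R : H → H → Prop) (p q : H → ℝ) : Prop :=
  ∀ h, upperSum R q h ≤ upperSum R p h

/-- `p ≻^SD q`. -/
def SDgt [Fintype H] (R : H → H → Prop) (p q : H → ℝ) : Prop :=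
  SDge R p q ∧ ¬ SDge R q p

/-- Total weight that `p` puts on the indifference class of `h`. -/
def classSum [Fintype H] (R : H → H → Prop) (p : H → ℝ) (h : H) : ℝ :=
  ∑ h' ∈ Finset.univ.filter (fun h' => R h' h ∧ R h h'), p h'

/-- `p ~^DL q`: all indifference-class sums agree. -/
def DLsim [Fintype H] (R : H → H → Prop) (p q : H → ℝ) : Prop :=
  ∀ h, classSum R p h = classSum R q h

/-- `p ≻^DL q`: there is an indifference class (represented by a house `h`) on which
`p` puts strictly more weight, while all strictly more preferred classes have equal sums. -/
def DLgt [Fintype H] (R : H → H → Prop) (p q : H → ℝ) : Prop :=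
  ∃ h, classSum R q h < classSum R p h ∧
    ∀ h', R h' h ∧ ¬ R h h' → classSum R p h' = classSum R q h'

/-- `p ≿^DL q`. -/
def DLge [Fintype H] (R : H → H → Prop) (p q : H → ℝ) : Prop :=
  DLgt R p q ∨ DLsim R p q

/-- An allocation is a nonnegative function on houses. -/
def IsAlloc (p : H → ℝ) : Prop := ∀ h, 0 ≤ p h

/-- A preference is a total preorder (total and transitive relation). -/
def TotalPreorderRel (R : H → H → Prop) : Prop := Total R ∧ Transitive R

/-- An assignment with respect to endowments `e`. -/
def IsAssignment [Fintype N] (e x : N → H → ℝ) : Prop :=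
  (∀ i, IsAlloc (x i)) ∧ ∀ h, ∑ i, x i h = ∑ i, e i h

/-- SD-efficiency. -/
def SDEfficient [Fintype N] [Fintype H] (R : N → H → H → Prop) (e x : N → H → ℝ) : Prop :=
  ¬ ∃ y, IsAssignment e y ∧ (∀ i, SDge (R i) (y i) (x i)) ∧ ∃ i, SDgt (R i) (y i) (x i)

/-- SD individual rationality. -/
def SDIR [Fintype H] (R : N → H → H → Prop) (e x : N → H → ℝ) : Prop :=
  ∀ i, SDge (R i) (x i) (e i)

/-- SD core stability. -/
def SDCoreStable [Fintype N] [Fintype H] (R : N → H → H → Prop) (e x : N → H → ℝ) : Prop :=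
  ¬ ∃ (S : Finset N) (y : N → H → ℝ), S.Nonempty ∧ (∀ i ∈ S, IsAlloc (y i)) ∧
      (∀ h, ∑ i ∈ S, y i h = ∑ i ∈ S, e i h) ∧ ∀ i ∈ S, SDgt (R i) (y i) (x i)

/-- SD strict core membership. -/
def SDStrictCore [Fintype N] [Fintype H] (R : N → H → H → Prop) (e x : N → H → ℝ) : Prop :=
  ¬ ∃ (S : Finset N) (y : N → H → ℝ), S.Nonempty ∧ (∀ i ∈ S, IsAlloc (y i)) ∧
      (∀ h, ∑ i ∈ S, y i h = ∑ i ∈ S, e i h) ∧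
      (∀ i ∈ S, SDge (R i) (y i) (x i)) ∧ ∃ i ∈ S, SDgt (R i) (y i) (x i)

/-- The allocation consisting of exactly one unit of house `h`. -/
def delta [DecidableEq H] (h : H) : H → ℝ := fun h' => if h' = h then 1 else 0

end

/-- A (strict) linear order relation: total, transitive and antisymmetric
(`R a b` means `a ≿ b`). -/
def LinOrderRel (R : H → H → Prop) : Prop := Total R ∧ Transitive R ∧ AntiSymmetric R

/-- Endowments: e(1) = ½δ₁+½δ₂, e(2) = ½δ₃+½δ₅, e(3) = ½δ₁+½δ₄,
e(4) = ½δ₂+½δ₄, e(5) = ½δ₃+½δ₅ (houses h1,…,h5 encoded as 0,…,4). -/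
noncomputable def e5 : Fin 5 → Fin 5 → ℝ :=
  ![![1/2, 1/2, 0, 0, 0],
    ![0, 0, 1/2, 0, 1/2],
    ![1/2, 0, 0, 1/2, 0],
    ![0, 1/2, 0, 1/2, 0],
    ![0, 0, 1/2, 0, 1/2]]

/-- Ranks (0 = best): agent 1: h3≻h1≻h2≻h4≻h5; agent 2: h5≻h1≻h2≻h3≻h4;
agent 3: h1≻h4≻h2≻h3≻h5; agent 4: h2≻h4≻h1≻h3≻h5; agent 5: h5≻h3≻h1≻h2≻h4. -/
def rank13 : Fin 5 → Fin 5 → ℕ :=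
  ![![1, 2, 0, 3, 4], ![1, 2, 3, 4, 0], ![0, 2, 3, 1, 4], ![2, 0, 3, 1, 4], ![2, 3, 1, 4, 0]]

/-- The preference profile. -/
def R13 (i : Fin 5) (h h' : Fin 5) : Prop := rank13 i h ≤ rank13 i h'

/-- The family of assignments z_λ. -/
noncomputable def z13 (l : ℝ) : Fin 5 → Fin 5 → ℝ :=
  ![![l, 1/2 - l, 1/2, 0, 0],
    ![1/2 - l, l, 0, 0, 1/2],
    ![1/2, 0, 0, 1/2, 0],
    ![0, 1/2, 0, 1/2, 0],
    ![0, 0, 1/2, 0, 1/2]]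

/-- auxiliary perturbation: move `ε` of house 2 from agent 1 to agent 0
in exchange for `ε` of house 1. -/
noncomputable def pert13 (ε : ℝ) : Fin 5 → Fin 5 → ℝ :=
  ![![0, -ε, ε, 0, 0], ![0, ε, -ε, 0, 0], ![0,0,0,0,0], ![0,0,0,0,0], ![0,0,0,0,0]]

set_option maxHeartbeats 1000000 in
lemma swap_improves (x : Fin 5 → Fin 5 → ℝ)
    (hsum : ∀ h, ∑ i, x i h = ∑ i, e5 i h)
    (hpos : ∀ i h, 0 ≤ x i h)
    (h01 : x 1 2 ≤ x 0 1) (hpe : 0 < x 1 2) :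
    ∃ y, IsAssignment e5 y ∧ (∀ i, SDge (R13 i) (y i) (x i)) ∧
      ∃ i, SDgt (R13 i) (y i) (x i) := by
  set ε := x 1 2 with hε
  refine ⟨fun i h => x i h + pert13 ε i h, ⟨?_, ?_⟩, ?_, ?_⟩
  · intro i h
    have := hpos i h
    fin_cases i <;> fin_cases h <;> simp [pert13, Matrix.vecHead, Matrix.vecTail] at this ⊢ <;> linarith [hpos 0 1]
  · intro h
    have := hsum h
    fin_cases h <;>
      simp only [Fin.sum_univ_five] at this ⊢ <;>
        simp [pert13, e5] at this ⊢ <;> norm_num at this ⊢ <;> linarith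
  · intro i
    fin_cases i <;> intro h <;> fin_cases h <;>
      simp [upperSum, Finset.sum_filter, Fin.sum_univ_five, R13, rank13, pert13, Matrix.vecHead, Matrix.vecTail] <;> linarith
  · refine ⟨0, ?_, ?_⟩
    · intro h
      fin_cases h <;>
        simp [upperSum, Finset.sum_filter, Fin.sum_univ_five, R13, rank13, pert13, Matrix.vecHead, Matrix.vecTail] <;> linarith
    · intro hcon
      have := hcon 2
      simp [upperSum, Finset.sum_filter, Fin.sum_univ_five, R13, rank13, pert13, Matrix.vecHead, Matrix.vecTail] at this
      linarith

set_option maxHeartbeats 4000000 in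
/-- every SD-individually rational and SD-efficient assignment for this
profile equals `z13 λ` for some λ ∈ [0, ½]; in particular agents 3, 4, 5 receive
exactly their endowments. -/
theorem ir_eff_assignments_characterized :
    ∀ x : Fin 5 → Fin 5 → ℝ, IsAssignment e5 x → SDIR R13 e5 x → SDEfficient R13 e5 x →
      (∃ l : ℝ, 0 ≤ l ∧ l ≤ 1/2 ∧ x = z13 l) ∧
      (x 2 = e5 2 ∧ x 3 = e5 3 ∧ x 4 = e5 4) := by
  intro x hx hir heff
  obtain ⟨hpos, hsum⟩ := hx
  have P : ∀ i h : Fin 5, 0 ≤ x i h := fun i h => hpos i h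
  have N00 := P 0 0; have N01 := P 0 1; have N02 := P 0 2
  have N03 := P 0 3; have N04 := P 0 4
  have N10 := P 1 0; have N11 := P 1 1; have N12 := P 1 2
  have N13 := P 1 3; have N14 := P 1 4
  have N20 := P 2 0; have N21 := P 2 1; have N22 := P 2 2
  have N23 := P 2 3; have N24 := P 2 4
  have N30 := P 3 0; have N31 := P 3 1; have N32 := P 3 2
  have N33 := P 3 3; have N34 := P 3 4
  have N40 := P 4 0; have N41 := P 4 1; have N42 := P 4 2
  have N43 := P 4 3; have N44 := P 4 4
  have C0 := hsum 0; have C1 := hsum 1; have C2 := hsum 2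
  have C3 := hsum 3; have C4 := hsum 4
  simp [Fin.sum_univ_five, e5] at C0 C1 C2 C3 C4
  norm_num at C0 C1 C2 C3 C4
  have S1 := hir 0 0; have S2 := hir 0 1; have S3 := hir 0 4
  have T1 := hir 1 4; have T2 := hir 1 2; have T3 := hir 1 3
  have U1 := hir 2 0; have U2 := hir 2 3; have U3 := hir 2 4
  have V1 := hir 3 1; have V2 := hir 3 3; have V3 := hir 3 4
  have W1 := hir 4 4; have W2 := hir 4 2; have W3 := hir 4 3
  simp [upperSum, Finset.sum_filter, Fin.sum_univ_five, R13, rank13, e5] at S1 S2 S3 T1 T2 T3 U1 U2 U3 V1 V2 V3 W1 W2 W3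
  have R0 : x 0 0 + x 0 1 + x 0 2 + x 0 3 + x 0 4 = 1 := by
    linarith only [C0, C1, C2, C3, C4, S3, T3, U3, V3, W3]
  have R1 : x 1 0 + x 1 1 + x 1 2 + x 1 3 + x 1 4 = 1 := by
    linarith only [C0, C1, C2, C3, C4, S3, T3, U3, V3, W3]
  have R2 : x 2 0 + x 2 1 + x 2 2 + x 2 3 + x 2 4 = 1 := by
    linarith only [C0, C1, C2, C3, C4, S3, T3, U3, V3, W3]
  have R3 : x 3 0 + x 3 1 + x 3 2 + x 3 3 + x 3 4 = 1 := by
    linarith only [C0, C1, C2, C3, C4, S3, T3, U3, V3, W3]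
  have R4 : x 4 0 + x 4 1 + x 4 2 + x 4 3 + x 4 4 = 1 := by
    linarith only [C0, C1, C2, C3, C4, S3, T3, U3, V3, W3]
  have h03 : x 0 3 = 0 := by linarith only [R0, S2, N03, N04]
  have h04 : x 0 4 = 0 := by linarith only [R0, S2, N03, N04]
  have h13 : x 1 3 = 0 := by linarith only [R1, T2, N13]
  have h21 : x 2 1 = 0 := by linarith only [R2, U2, N21, N22, N24]
  have h22 : x 2 2 = 0 := by linarith only [R2, U2, N21, N22, N24]
  have h24 : x 2 4 = 0 := by linarith only [R2, U2, N21, N22, N24]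
  have h30 : x 3 0 = 0 := by linarith only [R3, V2, N30, N32, N34]
  have h32 : x 3 2 = 0 := by linarith only [R3, V2, N30, N32, N34]
  have h34 : x 3 4 = 0 := by linarith only [R3, V2, N30, N32, N34]
  have h40 : x 4 0 = 0 := by linarith only [R4, W2, N40, N41, N43]
  have h41 : x 4 1 = 0 := by linarith only [R4, W2, N40, N41, N43]
  have h43 : x 4 3 = 0 := by linarith only [R4, W2, N40, N41, N43]
  have h23 : x 2 3 = 1/2 := by
    linarith only [C3, h03, h13, h43, R2, U1, N21, N22, N24, R3, V1, N30, N32, N34]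
  have h33 : x 3 3 = 1/2 := by linarith only [C3, h03, h13, h43, h23]
  have h20 : x 2 0 = 1/2 := by linarith only [R2, h21, h22, h24, h23]
  have h31 : x 3 1 = 1/2 := by linarith only [R3, h30, h32, h34, h33]
  have h14 : x 1 4 = 1/2 := by linarith only [C4, h04, h24, h34, T1, W1]
  have h44 : x 4 4 = 1/2 := by linarith only [C4, h04, h24, h34, h14]
  have h42 : x 4 2 = 1/2 := by linarith only [R4, h40, h41, h43, h44]
  have e01 : x 0 0 + x 1 0 = 1/2 := by linarith only [C0, h20, h30, h40]
  have e12 : x 0 1 + x 1 1 = 1/2 := by linarith only [C1, h21, h31, h41]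
  have e22 : x 0 2 + x 1 2 = 1/2 := by linarith only [C2, h22, h32, h42]
  have r0 : x 0 0 + x 0 1 + x 0 2 = 1 := by linarith only [R0, h03, h04]
  have hx12 : x 1 2 = 0 := by
    by_contra hne
    have hpe : 0 < x 1 2 := lt_of_le_of_ne N12 (Ne.symm hne)
    exact heff (swap_improves x hsum P (by linarith only [r0, e22, e01, N10]) hpe)
  have h02 : x 0 2 = 1/2 := by linarith only [e22, hx12]
  constructor
  · refine ⟨x 0 0, N00, by linarith only [e01, N10], ?_⟩
    funext i h
    fin_cases i <;> fin_cases h <;>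
      simp only [Fin.zero_eta, Fin.mk_one, show ((⟨2, by omega⟩ : Fin 5)) = 2 from rfl,
        show ((⟨3, by omega⟩ : Fin 5)) = 3 from rfl,
        show ((⟨4, by omega⟩ : Fin 5)) = 4 from rfl] <;>
      simp [z13, Matrix.vecHead, Matrix.vecTail] <;>
      linarith only [h03, h04, h13, h14, h20, h21, h22, h23, h24, h30, h31, h32, h33, h34,
        h40, h41, h42, h43, h44, e01, e12, e22, r0, h02, hx12]
  · refine ⟨?_, ?_, ?_⟩ <;> funext h <;> fin_cases h <;>
      simp only [Fin.zero_eta, Fin.mk_one, show ((⟨2, by omega⟩ : Fin 5)) = 2 from rfl,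
        show ((⟨3, by omega⟩ : Fin 5)) = 3 from rfl,
        show ((⟨4, by omega⟩ : Fin 5)) = 4 from rfl] <;>
      simp [e5, Matrix.vecHead, Matrix.vecTail] <;>
      linarith only [h03, h04, h13, h14, h20, h21, h22, h23, h24, h30, h31, h32, h33, h34,
        h40, h41, h42, h43, h44, e01, e12, e22, r0, h02, hx12]
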